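/- Let n, m ≥ 2 and let G = B_{n,m} be the dumbbell graph, viewed as the simplicial complex Δ(G). Then the facet family of δ_NF(Δ(G)) is exactly { {x_i, y_j} : 1 ≤ i ≤ n, 1 ≤ j ≤ m, (i, j) ≠ (1, 1) }; that is, δ_NF(Δ(G)) is the complete bipartite graph K_{n,m} on parts A and B with the single edge {x_1,y_1} removed. -/

import Mathlib

/-- `C` is a vertex cover of the complex with facet family `F`:
it meets every facet. -/
def IsVC {V : Type*} (F : Set (Set V)) (C : Set V) : Prop :=
  ∀ f ∈ F, (C ∩ f).Nonempty

/-- `C` is a minimal vertex cover. -/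
def IsMinVC {V : Type*} (F : Set (Set V)) (C : Set V) : Prop :=
  IsVC F C ∧ ∀ D : Set V, D ⊂ C → ¬ IsVC F D

/-- The NF-operator on facet families: the facets of `nf F` are the
complements of the minimal vertex covers of `F`. -/
def nf {V : Type*} (F : Set (Set V)) : Set (Set V) :=
  {S | ∃ C : Set V, IsMinVC F C ∧ S = Cᶜ}

/-- The dumbbell graph `B_{n,m}` as a family of edges (facets) on the vertex
set `Fin n ⊕ Fin m`: all pairs inside `A = range Sum.inl`, all pairs inside
`B = range Sum.inr`, and the bridge edge `{x₁, y₁}` (indices `0`). -/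
def dumbbell (n m : ℕ) : Set (Set (Fin n ⊕ Fin m)) :=
  {e | (∃ i j : Fin n, i ≠ j ∧ e = {Sum.inl i, Sum.inl j}) ∨
       (∃ i j : Fin m, i ≠ j ∧ e = {Sum.inr i, Sum.inr j}) ∨
       (∃ (hn : 0 < n) (hm : 0 < m), e = {Sum.inl ⟨0, hn⟩, Sum.inr ⟨0, hm⟩})}

/-- For `n, m ≥ 2`, the facet family of `δ_NF(Δ(B_{n,m}))` is exactly
`{ {xᵢ, yⱼ} : (i, j) ≠ (1, 1) }`, i.e. the complete bipartite graph `K_{n,m}`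
with the single edge `{x₁, y₁}` removed. -/
theorem dumbbell_nf_one (n m : ℕ) (hn : 2 ≤ n) (hm : 2 ≤ m) :
    nf (dumbbell n m) =
      {e : Set (Fin n ⊕ Fin m) | ∃ (i : Fin n) (j : Fin m),
        ¬(i = (⟨0, by omega⟩ : Fin n) ∧ j = (⟨0, by omega⟩ : Fin m)) ∧
        e = {Sum.inl i, Sum.inr j}} := by
  have hn0 : 0 < n := by omega
  have hm0 : 0 < m := by omega
  ext e
  simp only [nf, Set.mem_setOf_eq]
  constructor
  · rintro ⟨C, ⟨hVC, hmin⟩, rfl⟩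
    -- at most one missing vertex on each side
    have hA1 : ∀ i i' : Fin n, Sum.inl i ∉ C → Sum.inl i' ∉ C → i = i' := by
      intro i i' hi hi'
      by_contra hne
      obtain ⟨v, hvC, hvf⟩ := hVC {Sum.inl i, Sum.inl i'} (Or.inl ⟨i, i', hne, rfl⟩)
      simp only [Set.mem_insert_iff, Set.mem_singleton_iff] at hvf
      rcases hvf with rfl | rfl
      · exact hi hvC
      · exact hi' hvC
    have hB1 : ∀ i i' : Fin m, Sum.inr i ∉ C → Sum.inr i' ∉ C → i = i' := by
      intro i i' hi hi'
      by_contra hne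
      obtain ⟨v, hvC, hvf⟩ := hVC {Sum.inr i, Sum.inr i'} (Or.inr (Or.inl ⟨i, i', hne, rfl⟩))
      simp only [Set.mem_insert_iff, Set.mem_singleton_iff] at hvf
      rcases hvf with rfl | rfl
      · exact hi hvC
      · exact hi' hvC
    -- at least one missing vertex on each side
    have hAex : ∃ i : Fin n, Sum.inl i ∉ C := by
      by_contra h
      push_neg at h
      set k : Fin n := ⟨1, by omega⟩ with hk
      refine hmin (C \ {Sum.inl k}) ⟨Set.diff_subset, fun hsub => ?_⟩ ?_
      · have := hsub (h k)
        simp at this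
      · intro f hf
        rcases hf with ⟨a, b, hab, rfl⟩ | ⟨a, b, hab, rfl⟩ | ⟨hn', hm', rfl⟩
        · by_cases ha : a = k
          · exact ⟨Sum.inl b, ⟨h b, by simp [hk]; omega⟩, by simp⟩
          · exact ⟨Sum.inl a, ⟨h a, by simp [ha]⟩, by simp⟩
        · obtain ⟨v, hvC, hvf⟩ := hVC {Sum.inr a, Sum.inr b} (Or.inr (Or.inl ⟨a, b, hab, rfl⟩))
          refine ⟨v, ⟨hvC, ?_⟩, hvf⟩
          simp only [Set.mem_insert_iff, Set.mem_singleton_iff] at hvf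
          rcases hvf with rfl | rfl <;> simp
        · refine ⟨Sum.inl ⟨0, hn'⟩, ⟨h _, by simp [hk]⟩, by simp⟩
    have hBex : ∃ j : Fin m, Sum.inr j ∉ C := by
      by_contra h
      push_neg at h
      set k : Fin m := ⟨1, by omega⟩ with hk
      refine hmin (C \ {Sum.inr k}) ⟨Set.diff_subset, fun hsub => ?_⟩ ?_
      · have := hsub (h k)
        simp at this
      · intro f hf
        rcases hf with ⟨a, b, hab, rfl⟩ | ⟨a, b, hab, rfl⟩ | ⟨hn', hm', rfl⟩
        · obtain ⟨v, hvC, hvf⟩ := hVC {Sum.inl a, Sum.inl b} (Or.inl ⟨a, b, hab, rfl⟩)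
          refine ⟨v, ⟨hvC, ?_⟩, hvf⟩
          simp only [Set.mem_insert_iff, Set.mem_singleton_iff] at hvf
          rcases hvf with rfl | rfl <;> simp
        · by_cases ha : a = k
          · exact ⟨Sum.inr b, ⟨h b, by simp [hk]; omega⟩, by simp⟩
          · exact ⟨Sum.inr a, ⟨h a, by simp [ha]⟩, by simp⟩
        · refine ⟨Sum.inr ⟨0, hm'⟩, ⟨h _, by simp [hk]⟩, by simp⟩
    obtain ⟨i, hi⟩ := hAex
    obtain ⟨j, hj⟩ := hBex
    refine ⟨i, j, ?_, ?_⟩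
    · rintro ⟨rfl, rfl⟩
      obtain ⟨v, hvC, hvf⟩ := hVC {Sum.inl ⟨0, hn0⟩, Sum.inr ⟨0, hm0⟩}
        (Or.inr (Or.inr ⟨hn0, hm0, rfl⟩))
      simp only [Set.mem_insert_iff, Set.mem_singleton_iff] at hvf
      rcases hvf with rfl | rfl
      · exact hi hvC
      · exact hj hvC
    · ext v
      rcases v with a | b
      · simp only [Set.mem_compl_iff, Set.mem_insert_iff, Set.mem_singleton_iff,
          Sum.inl.injEq, reduceCtorEq, or_false]
        exact ⟨fun h => hA1 a i h hi, fun h => h ▸ hi⟩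
      · simp only [Set.mem_compl_iff, Set.mem_insert_iff, Set.mem_singleton_iff,
          Sum.inr.injEq, reduceCtorEq, false_or]
        exact ⟨fun h => hB1 b j h hj, fun h => h ▸ hj⟩
  · rintro ⟨i, j, hij, rfl⟩
    refine ⟨{Sum.inl i, Sum.inr j}ᶜ, ⟨?_, ?_⟩, (compl_compl _).symm⟩
    · intro f hf
      rcases hf with ⟨a, b, hab, rfl⟩ | ⟨a, b, hab, rfl⟩ | ⟨hn', hm', rfl⟩
      · by_cases ha : a = i
        · exact ⟨Sum.inl b, by simp [Set.mem_compl_iff]; omega⟩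
        · exact ⟨Sum.inl a, by simp [Set.mem_compl_iff, ha]⟩
      · by_cases ha : a = j
        · exact ⟨Sum.inr b, by simp [Set.mem_compl_iff]; omega⟩
        · exact ⟨Sum.inr a, by simp [Set.mem_compl_iff, ha]⟩
      · rw [not_and_or] at hij
        rcases hij with h | h
        · refine ⟨Sum.inl ⟨0, hn'⟩, by simp [Set.mem_compl_iff]; omega⟩
        · refine ⟨Sum.inr ⟨0, hm'⟩, by simp [Set.mem_compl_iff]; omega⟩
    · intro D hD hDVC
      obtain ⟨v, hvC, hvD⟩ := Set.exists_of_ssubset hD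
      have hDsub : D ⊆ {Sum.inl i, Sum.inr j}ᶜ := hD.1
      rcases v with a | b
      · have ha : a ≠ i := by
          intro h; exact hvC (by simp [h])
        obtain ⟨w, hwD, hwf⟩ := hDVC {Sum.inl a, Sum.inl i} (Or.inl ⟨a, i, ha, rfl⟩)
        simp only [Set.mem_insert_iff, Set.mem_singleton_iff] at hwf
        rcases hwf with rfl | rfl
        · exact hvD hwD
        · exact (hDsub hwD) (by simp)
      · have hb : b ≠ j := by
          intro h; exact hvC (by simp [h])
        obtain ⟨w, hwD, hwf⟩ := hDVC {Sum.inr b, Sum.inr j} (Or.inr (Or.inl ⟨b, j, hb, rfl⟩))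
        simp only [Set.mem_insert_iff, Set.mem_singleton_iff] at hwf
        rcases hwf with rfl | rfl
        · exact hvD hwD
        · exact (hDsub hwD) (by simp)
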